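/- Let λ, t be real numbers with 0.5 ≤ λ ≤ 0.8194 and 2.8 ≤ t ≤ 5.78. Then the function m ↦ F(λ, t, m) is monotone nondecreasing on the interval (1, ∞); that is, for all real m₂ ≥ m₁ > 1, F(λ, t, m₂) ≥ F(λ, t, m₁), where F(λ,t,m) = λ·(−1 + (t−3π/2)²/2 − (t−3π/2)⁴/24) + (−1 + (λt−3π/2)²/2 − (λt−3π/2)⁴/24) + λ(1−λ²)·(1 + 1/(m²−1))·(t − t³/(6m²) + 1 − (t−3π/2)²/2). -/

import Mathlib

open Real

noncomputable def F (l t m : ℝ) : ℝ :=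
  l * (-1 + (t - 3 * π / 2) ^ 2 / 2 - (t - 3 * π / 2) ^ 4 / 24) +
    (-1 + (l * t - 3 * π / 2) ^ 2 / 2 - (l * t - 3 * π / 2) ^ 4 / 24) +
    l * (1 - l ^ 2) * (1 + 1 / (m ^ 2 - 1)) *
      (t - t ^ 3 / (6 * m ^ 2) + 1 - (t - 3 * π / 2) ^ 2 / 2)

theorem stmt_16 (l t : ℝ) (hl0 : 0.5 ≤ l) (hl1 : l ≤ 0.8194)
    (ht0 : 2.8 ≤ t) (ht1 : t ≤ 5.78) (m₁ m₂ : ℝ) (hm1 : 1 < m₁) (hm12 : m₁ ≤ m₂) :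
    F l t m₁ ≤ F l t m₂ := by
  have hpl : π < 3.15 := pi_lt_d2
  have hpg : 3.141592 < π := pi_gt_d6
  have hm2 : 1 < m₂ := lt_of_lt_of_le hm1 hm12
  have h1 : (0:ℝ) < m₁ ^ 2 - 1 := by nlinarith
  have h2 : (0:ℝ) < m₂ ^ 2 - 1 := by nlinarith
  have h1n : m₁ ^ 2 - 1 ≠ 0 := ne_of_gt h1
  have h2n : m₂ ^ 2 - 1 ≠ 0 := ne_of_gt h2
  have hm1n : m₁ ≠ 0 := by positivity
  have hm2n : m₂ ≠ 0 := by positivity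
  have hD : 0 ≤ t ^ 3 / 6 - (t + 1 - (t - 3 * π / 2) ^ 2 / 2) := by
    nlinarith [sq_nonneg (t - 2.8), mul_nonneg (mul_nonneg (by linarith : (0:ℝ) ≤ t - 2.8)
      (by linarith : (0:ℝ) ≤ t - 2.8)) (by linarith : (0:ℝ) ≤ t - 2.8), sq_nonneg (t - 3 * π / 2)]
  have hA : 0 ≤ l * (1 - l ^ 2) := by nlinarith
  have key : F l t m₂ - F l t m₁ =
      l * (1 - l ^ 2) * (t ^ 3 / 6 - (t + 1 - (t - 3 * π / 2) ^ 2 / 2)) * (m₂ ^ 2 - m₁ ^ 2) /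
        ((m₁ ^ 2 - 1) * (m₂ ^ 2 - 1)) := by
    unfold F
    field_simp
    ring
  have hsq : 0 ≤ m₂ ^ 2 - m₁ ^ 2 := by nlinarith
  have hrhs : 0 ≤ l * (1 - l ^ 2) * (t ^ 3 / 6 - (t + 1 - (t - 3 * π / 2) ^ 2 / 2)) *
      (m₂ ^ 2 - m₁ ^ 2) / ((m₁ ^ 2 - 1) * (m₂ ^ 2 - 1)) :=
    div_nonneg (mul_nonneg (mul_nonneg hA hD) hsq) (le_of_lt (mul_pos h1 h2))
  linarith
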